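/- Let k_1 < … < k_ℓ be natural numbers and U_λ = { Wr[H_{k_1}, …, H_{k_ℓ}, p] : p a polynomial with complex coefficients }. Then the set of natural numbers that do not occur as the degree of a nonzero element of U_λ is finite of cardinality exactly |λ| = (Σ_{i=1}^{ℓ} k_i) − ℓ(ℓ−1)/2; that is, the codimension of U_λ in the space of all polynomials is |λ|. -/

import Mathlib

open Polynomial MeasureTheory Matrix Finset

/-- The physicists' Hermite polynomials: `H 0 = 1`, `H (n+1) = 2X * H n - (H n)'`. -/
noncomputable def pHermite (R : Type*) [CommRing R] : ℕ → Polynomial R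
  | 0 => 1
  | n + 1 => 2 * X * pHermite R n - derivative (pHermite R n)

/-- The Wronskian determinant of a finite family of polynomials. -/
noncomputable def polyWronskian {R : Type*} [CommRing R] {n : ℕ}
    (f : Fin n → Polynomial R) : Polynomial R :=
  (Matrix.of fun i j : Fin n => (⇑(derivative (R := R)))^[(i : ℕ)] (f j)).det


lemma pHermite_props (n : ℕ) :
    (pHermite ℂ n).natDegree = n ∧ (pHermite ℂ n).leadingCoeff = 2 ^ n := by
  induction n with
  | zero => simp [pHermite]
  | succ n ih =>
    obtain ⟨hd, hl⟩ := ih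
    have h2 : (2 : ℂ) ^ n ≠ 0 := pow_ne_zero _ two_ne_zero
    have hne : pHermite ℂ n ≠ 0 := fun h => h2 (by simpa [h, leadingCoeff] using hl.symm)
    have h2x : (2 * X : ℂ[X]) = C 2 * X := by rw [map_ofNat]
    have h2xne : (2 * X : ℂ[X]) ≠ 0 := by
      rw [h2x]; exact mul_ne_zero (C_ne_zero.mpr two_ne_zero) X_ne_zero
    have h2xdeg : (2 * X : ℂ[X]).natDegree = 1 := by
      rw [h2x, natDegree_C_mul two_ne_zero, natDegree_X]
    have h2xlc : (2 * X : ℂ[X]).leadingCoeff = 2 := by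
      rw [h2x]; simp [leadingCoeff_mul]
    have hrec : pHermite ℂ (n+1) = 2 * X * pHermite ℂ n - derivative (pHermite ℂ n) := rfl
    have hmul : (2 * X * pHermite ℂ n).natDegree = n + 1 := by
      rw [natDegree_mul h2xne hne, hd, h2xdeg]; ring
    have hder : (derivative (pHermite ℂ n)).natDegree < (2 * X * pHermite ℂ n).natDegree := by
      have := natDegree_derivative_le (pHermite ℂ n)
      rw [hd] at this; omega
    have hdeg : (pHermite ℂ (n+1)).natDegree = n + 1 := by
      rw [hrec, natDegree_sub_eq_left_of_natDegree_lt hder, hmul]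
    refine ⟨hdeg, ?_⟩
    have hc : (2 * X * pHermite ℂ n).coeff (n+1) = 2 * 2 ^ n := by
      rw [← hmul, ← leadingCoeff, leadingCoeff_mul, h2xlc, hl]
    rw [leadingCoeff, hdeg, hrec, coeff_sub,
      coeff_eq_zero_of_natDegree_lt (by omega : (derivative (pHermite ℂ n)).natDegree < n + 1),
      sub_zero, hc]
    ring


lemma coeff_mul_of_natDegree_le' {R : Type*} [CommSemiring R] {p q : R[X]} {a b : ℕ}
    (hp : p.natDegree ≤ a) (hq : q.natDegree ≤ b) :
    (p * q).coeff (a + b) = p.coeff a * q.coeff b := by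
  rw [coeff_mul]
  apply Finset.sum_eq_single_of_mem (a, b) (by simp)
  rintro ⟨x, y⟩ hxy hne
  simp only [Finset.HasAntidiagonal.mem_antidiagonal] at hxy
  rcases lt_or_ge a x with h | h
  · rw [coeff_eq_zero_of_natDegree_lt (lt_of_le_of_lt hp h), zero_mul]
  · have hx : x < a := by
      rcases lt_or_eq_of_le h with h' | h'
      · exact h'
      · exfalso; apply hne; simp [h'.symm]; omega
    have : b < y := by omega
    rw [coeff_eq_zero_of_natDegree_lt (lt_of_le_of_lt hq this), mul_zero]

lemma coeff_prod_of_natDegree_le'' {R : Type*} [CommSemiring R] {ι : Type*} (s : Finset ι)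
    (f : ι → R[X]) (e : ι → ℕ) (h : ∀ i ∈ s, (f i).natDegree ≤ e i) :
    (∏ i ∈ s, f i).coeff (∑ i ∈ s, e i) = ∏ i ∈ s, (f i).coeff (e i) := by
  induction s using Finset.cons_induction with
  | empty => simp
  | cons a s ha ih =>
    rw [Finset.prod_cons, Finset.sum_cons, Finset.prod_cons,
      coeff_mul_of_natDegree_le' (h a (Finset.mem_cons_self a s))
        ((natDegree_prod_le _ _).trans (Finset.sum_le_sum fun i hi => h i (Finset.mem_cons_of_mem hi))),
      ih fun i hi => h i (Finset.mem_cons_of_mem hi)]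

set_option maxHeartbeats 1000000 in
lemma sum_ge_of_injective : ∀ {n : ℕ} (d : Fin n → ℕ), Function.Injective d →
    ∑ i : Fin n, (i : ℕ) ≤ ∑ i, d i := by
  intro n
  induction n with
  | zero => simp
  | succ n ih =>
    intro d hd
    obtain ⟨j0, -, hj0⟩ := Finset.exists_max_image Finset.univ d ⟨0, Finset.mem_univ 0⟩
    set d' : Fin (n+1) → ℕ := d ∘ (Equiv.swap j0 (Fin.last n)) with hd'
    have hd'inj : Function.Injective d' := hd.comp (Equiv.injective _)
    have hsum : ∑ i, d' i = ∑ i, d i := Equiv.sum_comp _ d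
    have hmax : ∀ i, d' i ≤ d' (Fin.last n) := by
      intro i
      simp only [hd', Function.comp_apply, Equiv.swap_apply_right]
      exact hj0 _ (Finset.mem_univ _)
    have hlast : n ≤ d' (Fin.last n) := by
      by_contra hlt
      push_neg at hlt
      have himg : Finset.univ.image d' ⊆ Finset.range n := by
        intro x hx
        simp only [Finset.mem_image] at hx
        obtain ⟨i, -, rfl⟩ := hx
        exact Finset.mem_range.mpr (lt_of_le_of_lt (hmax i) hlt)
      have := Finset.card_le_card himg
      rw [Finset.card_image_of_injective _ hd'inj] at this
      simp at this
    have := ih (d' ∘ Fin.castSucc) (hd'inj.comp (Fin.castSucc_injective n))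
    calc ∑ i : Fin (n+1), (i : ℕ) = (∑ i : Fin n, (i:ℕ)) + n := by
          rw [Fin.sum_univ_castSucc]; simp
      _ ≤ (∑ i : Fin n, d' (Fin.castSucc i)) + d' (Fin.last n) := by
          exact Nat.add_le_add this hlast
      _ = ∑ i, d' i := (Fin.sum_univ_castSucc d').symm
      _ = ∑ i, d i := hsum


lemma polyWronskian_props {n : ℕ} (f : Fin n → Polynomial ℂ) (hf : ∀ j, f j ≠ 0)
    (hd : Function.Injective fun j => (f j).natDegree) :
    polyWronskian f ≠ 0 ∧
      (polyWronskian f).natDegree = (∑ j, (f j).natDegree) - ∑ i : Fin n, (i : ℕ) := by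
  set d : Fin n → ℕ := fun j => (f j).natDegree with hdd
  set S := ∑ j, d j with hS
  set C := ∑ i : Fin n, (i : ℕ) with hC
  set D := S - C with hDdef
  have hdet : polyWronskian f = ∑ σ : Equiv.Perm (Fin n), Equiv.Perm.sign σ •
      ∏ j, (⇑(derivative (R := ℂ)))^[(σ j : ℕ)] (f j) := by
    rw [polyWronskian, Matrix.det_apply]
    rfl
  have hsub : ∀ σ : Equiv.Perm (Fin n), (∀ j, (σ j : ℕ) ≤ d j) →
      (∑ j, (d j - (σ j : ℕ))) + C = S := by
    intro σ hA
    have h1 : ∑ j, ((σ j : ℕ)) = C := Equiv.sum_comp σ (fun j => (j : ℕ))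
    calc (∑ j, (d j - (σ j : ℕ))) + C = (∑ j, (d j - (σ j : ℕ))) + ∑ j, ((σ j : ℕ)) := by rw [h1]
      _ = ∑ j, ((d j - (σ j : ℕ)) + (σ j : ℕ)) := (Finset.sum_add_distrib).symm
      _ = ∑ j, d j := Finset.sum_congr rfl fun j _ => Nat.sub_add_cancel (hA j)
  have key : ∀ σ : Equiv.Perm (Fin n),
      (∏ j, (⇑(derivative (R := ℂ)))^[(σ j : ℕ)] (f j)).coeff D
        = ∏ j, (((d j).descFactorial (σ j : ℕ) : ℂ) * (f j).leadingCoeff) := by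
    intro σ
    by_cases hA : ∀ j, (σ j : ℕ) ≤ d j
    · have hsum : ∑ j, (d j - (σ j : ℕ)) = D := by have := hsub σ hA; omega
      rw [← hsum, coeff_prod_of_natDegree_le'' _ _ _
        (fun j _ => natDegree_iterate_derivative (f j) _)]
      refine Finset.prod_congr rfl fun j _ => ?_
      rw [Polynomial.coeff_iterate_derivative, Nat.sub_add_cancel (hA j), nsmul_eq_mul]
      norm_cast
    · push_neg at hA
      obtain ⟨j0, hj0⟩ := hA
      rw [Finset.prod_eq_zero (Finset.mem_univ j0)
        (Polynomial.iterate_derivative_eq_zero hj0), coeff_zero,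
        Finset.prod_eq_zero (Finset.mem_univ j0)]
      rw [Nat.descFactorial_eq_zero_iff_lt.mpr hj0]
      simp
  have hcoeff : (polyWronskian f).coeff D =
      (∏ j, (f j).leadingCoeff) *
        (Matrix.of fun i j : Fin n => ((d j).descFactorial (i : ℕ) : ℂ)).det := by
    rw [hdet, finset_sum_coeff]
    simp_rw [Polynomial.coeff_smul, key]
    rw [Matrix.det_apply, Finset.mul_sum]
    refine Finset.sum_congr rfl fun σ _ => ?_
    rw [Finset.prod_mul_distrib]
    simp only [Matrix.of_apply, Units.smul_def, zsmul_eq_mul]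
    ring
  have hvdm : (Matrix.of fun i j : Fin n => ((d j).descFactorial (i : ℕ) : ℂ)).det ≠ 0 := by
    have heq : (Matrix.of fun i j : Fin n => ((d j).descFactorial (i : ℕ) : ℂ)) =
        (Matrix.of fun i j : Fin n =>
          ((descPochhammer ℂ (j : ℕ)).eval ((d i : ℂ))))ᵀ := by
      refine Matrix.ext fun i j => ?_
      simp only [Matrix.transpose_apply, Matrix.of_apply]
      rw [← descPochhammer_eval_eq_descFactorial]
    rw [heq, Matrix.det_transpose,
      ← Matrix.det_eval_matrixOfPolynomials_eq_det_vandermonde _ _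
        (fun i => descPochhammer_natDegree ℂ _) (fun i => monic_descPochhammer ℂ _)]
    rw [Matrix.det_vandermonde_ne_zero_iff]
    intro a b hab
    exact hd (Nat.cast_injective hab)
  have hub : (polyWronskian f).natDegree ≤ D := by
    rw [hdet]
    apply natDegree_sum_le_of_forall_le
    intro σ _
    rw [Units.smul_def, zsmul_eq_mul]
    refine natDegree_mul_le.trans ?_
    rw [natDegree_intCast, zero_add]
    by_cases hA : ∀ j, (σ j : ℕ) ≤ d j
    · refine (natDegree_prod_le _ _).trans ?_
      have h2 : ∑ j, ((⇑(derivative (R := ℂ)))^[(σ j : ℕ)] (f j)).natDegree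
          ≤ ∑ j, (d j - (σ j : ℕ)) :=
        Finset.sum_le_sum fun j _ => natDegree_iterate_derivative (f j) _
      have := hsub σ hA
      omega
    · push_neg at hA
      obtain ⟨j0, hj0⟩ := hA
      rw [Finset.prod_eq_zero (Finset.mem_univ j0)
        (Polynomial.iterate_derivative_eq_zero hj0)]
      simp
  have hc0 : (polyWronskian f).coeff D ≠ 0 := by
    rw [hcoeff]
    exact mul_ne_zero
      (Finset.prod_ne_zero_iff.mpr fun j _ => leadingCoeff_ne_zero.mpr (hf j)) hvdm
  exact ⟨fun h => hc0 (by simp [h]),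
    le_antisymm hub (le_natDegree_of_ne_zero hc0)⟩


section Linear
variable {ℓ : ℕ} (g : Fin ℓ → Polynomial ℂ)

lemma wr_matrix_eq (p : Polynomial ℂ) :
    (Matrix.of fun i j : Fin (ℓ+1) =>
        (⇑(derivative (R := ℂ)))^[(i : ℕ)] ((Fin.snoc g p : Fin (ℓ+1) → Polynomial ℂ) j)) =
      (Matrix.of fun i j : Fin (ℓ+1) =>
        (⇑(derivative (R := ℂ)))^[(i : ℕ)] ((Fin.snoc g 0 : Fin (ℓ+1) → Polynomial ℂ) j)).updateCol
        (Fin.last ℓ) (fun i => (⇑(derivative (R := ℂ)))^[(i : ℕ)] p) := by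
  refine Matrix.ext fun i j => ?_
  induction j using Fin.lastCases with
  | last => rw [Matrix.updateCol_apply]; simp [Fin.snoc_last]
  | cast j' =>
    rw [Matrix.updateCol_apply]
    simp [Fin.snoc_castSucc, (Fin.castSucc_lt_last j').ne]

noncomputable def wrL : Polynomial ℂ →ₗ[ℂ] Polynomial ℂ where
  toFun p := polyWronskian (Fin.snoc g p)
  map_add' p q := by
    unfold polyWronskian
    rw [wr_matrix_eq g (p+q), wr_matrix_eq g p, wr_matrix_eq g q]
    rw [show (fun i : Fin (ℓ+1) => (⇑(derivative (R := ℂ)))^[(i : ℕ)] (p + q)) =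
        (fun i : Fin (ℓ+1) => (⇑(derivative (R := ℂ)))^[(i : ℕ)] p) +
        (fun i : Fin (ℓ+1) => (⇑(derivative (R := ℂ)))^[(i : ℕ)] q) from
      funext fun i => by simp [iterate_map_add], Matrix.det_updateCol_add]
  map_smul' c p := by
    simp only [RingHom.id_apply]
    unfold polyWronskian
    rw [wr_matrix_eq g (c • p), wr_matrix_eq g p]
    have hcol : (fun i : Fin (ℓ+1) => (⇑(derivative (R := ℂ)))^[(i : ℕ)] (c • p)) =
        (C c) • (fun i : Fin (ℓ+1) => (⇑(derivative (R := ℂ)))^[(i : ℕ)] p) := by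
      funext i
      simp [Polynomial.iterate_derivative_smul, smul_eq_C_mul]
    rw [hcol, Matrix.det_updateCol_smul, smul_eq_C_mul]

lemma wrL_apply (p : Polynomial ℂ) : wrL g p = polyWronskian (Fin.snoc g p) := rfl

lemma wrL_span_zero {r : Polynomial ℂ} (hr : r ∈ Submodule.span ℂ (Set.range g)) :
    wrL g r = 0 := by
  have hsub : Set.range g ⊆ (LinearMap.ker (wrL g) : Set (Polynomial ℂ)) := by
    rintro _ ⟨i0, rfl⟩
    simp only [SetLike.mem_coe, LinearMap.mem_ker, wrL_apply]
    apply Matrix.det_zero_of_column_eq (Fin.castSucc_lt_last i0).ne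
    intro r
    simp [Fin.snoc_castSucc, Fin.snoc_last]
  exact LinearMap.mem_ker.mp (Submodule.span_le.mpr hsub hr)

end Linear

lemma exists_reduce {ℓ : ℕ} (k : Fin ℓ → ℕ) :
    ∀ N (p : Polynomial ℂ), p.natDegree ≤ N →
      ∃ r ∈ Submodule.span ℂ (Set.range fun i => pHermite ℂ (k i)),
        p - r = 0 ∨ (p - r).natDegree ∉ Set.range k := by
  intro N
  induction N using Nat.strong_induction_on with
  | _ N ih =>
    intro p hp
    by_cases h0 : p = 0
    · exact ⟨0, Submodule.zero_mem _, Or.inl (by simp [h0])⟩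
    by_cases hmem : p.natDegree ∈ Set.range k
    case neg => exact ⟨0, Submodule.zero_mem _, Or.inr (by simpa using hmem)⟩
    obtain ⟨i, hi⟩ := hmem
    obtain ⟨hgd, hgl⟩ := pHermite_props (k i)
    set g := pHermite ℂ (k i) with hg
    set c : ℂ := p.leadingCoeff / 2 ^ (k i) with hc
    have h2 : (2:ℂ) ^ (k i) ≠ 0 := pow_ne_zero _ two_ne_zero
    have hcne : c ≠ 0 := div_ne_zero (leadingCoeff_ne_zero.mpr h0) h2
    have hgne : g ≠ 0 := fun h => h2 (by rw [← hgl, h, leadingCoeff_zero])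
    have hsm : c • g = C c * g := smul_eq_C_mul c
    have hcg : C c * g ≠ 0 := mul_ne_zero (C_ne_zero.mpr hcne) hgne
    have hlc : p.leadingCoeff = (c • g).leadingCoeff := by
      rw [hsm, leadingCoeff_mul, leadingCoeff_C, hgl, div_mul_cancel₀ _ h2]
    have hdeq : p.degree = (c • g).degree := by
      rw [hsm, degree_eq_natDegree h0, degree_eq_natDegree hcg,
        natDegree_C_mul hcne, hgd, hi]
    have hlt : (p - c • g).degree < p.degree := degree_sub_lt hdeq h0 hlc
    set p' := p - c • g with hp'def
    have hmemspan : c • g ∈ Submodule.span ℂ (Set.range fun i => pHermite ℂ (k i)) :=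
      Submodule.smul_mem _ _ (Submodule.subset_span ⟨i, rfl⟩)
    by_cases hp' : p' = 0
    · exact ⟨c • g, hmemspan, Or.inl hp'⟩
    · have hplt : p'.natDegree < p.natDegree := natDegree_lt_natDegree hp' hlt
      obtain ⟨r', hr', hres⟩ := ih p'.natDegree (lt_of_lt_of_le hplt hp) p' le_rfl
      refine ⟨c • g + r', Submodule.add_mem _ hmemspan hr', ?_⟩
      have heq : p - (c • g + r') = p' - r' := by rw [hp'def]; ring
      rw [heq]
      exact hres


lemma gauss_int (n : ℕ) : ((∑ j ∈ Finset.range n, j : ℕ) : ℤ) * 2 = (n : ℤ) * ((n : ℤ) - 1) := by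
  have h := Finset.sum_range_id_mul_two n
  cases n with
  | zero => simp
  | succ m =>
    have : ((∑ j ∈ Finset.range (m+1), j : ℕ) : ℤ) * 2 = (((m+1) * (m+1-1) : ℕ) : ℤ) := by
      exact_mod_cast congrArg (Nat.cast : ℕ → ℤ) h
    rw [this]
    push_cast
    ring

section Comb
variable {ℓ : ℕ} {k : Fin ℓ → ℕ} (hk : StrictMono k)

include hk in
lemma sm_gap : ∀ (d : ℕ) (a : Fin ℓ) (h : (a : ℕ) + d < ℓ),
    k a + d ≤ k ⟨(a : ℕ) + d, h⟩ := by
  intro d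
  induction d with
  | zero =>
    intro a h
    have heq : (⟨(a : ℕ) + 0, h⟩ : Fin ℓ) = a := Fin.ext (by simp)
    rw [heq]
    omega
  | succ d ih =>
    intro a h
    have h' : (a : ℕ) + d < ℓ := by omega
    have h1 := ih a h'
    have hlt : k ⟨(a : ℕ) + d, h'⟩ < k ⟨(a : ℕ) + (d + 1), h⟩ :=
      hk (Fin.mk_lt_mk.mpr (by omega))
    omega

include hk in
lemma sm_gap' {a b : Fin ℓ} (hab : a ≤ b) : k a + ((b : ℕ) - (a : ℕ)) ≤ k b := by
  have hab' : (a : ℕ) ≤ (b : ℕ) := Fin.le_def.mp hab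
  have h : (a : ℕ) + ((b : ℕ) - (a : ℕ)) < ℓ := by have := b.isLt; omega
  have h2 := sm_gap hk ((b : ℕ) - (a : ℕ)) a h
  have heq : (⟨(a : ℕ) + ((b : ℕ) - (a : ℕ)), h⟩ : Fin ℓ) = b := Fin.ext (by simp; omega)
  rwa [heq] at h2

include hk in
lemma sm_self (i : Fin ℓ) : (i : ℕ) ≤ k i := by
  have hpos : 0 < ℓ := i.pos
  have h := sm_gap' hk (show (⟨0, hpos⟩ : Fin ℓ) ≤ i from Fin.mk_le_of_le_val (Nat.zero_le _))
  simp at h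
  omega

include hk in
lemma count_lt_eq (u : ℕ)
    (hu : (∑ i, k i) + u = (∑ i : Fin ℓ, (i : ℕ)) + ℓ) :
    (Finset.univ.filter fun i => k i < u).card = u := by
  obtain ⟨c, hcdef⟩ : ∃ c, (Finset.univ.filter fun i : Fin ℓ => k i < u).card = c := ⟨_, rfl⟩
  rw [hcdef]
  have hmem : ∀ i : Fin ℓ, i ∈ (Finset.univ.filter fun i : Fin ℓ => k i < u) ↔ k i < u := by
    intro i; rw [Finset.mem_filter]; simp
  have hcl : c ≤ ℓ := by
    rw [← hcdef]
    calc (Finset.univ.filter fun i : Fin ℓ => k i < u).card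
        ≤ (Finset.univ : Finset (Fin ℓ)).card := Finset.card_le_card (Finset.subset_univ _)
      _ = ℓ := by simp
  have hcu : c ≤ u := by
    rw [← hcdef]
    have : (Finset.univ.filter fun i : Fin ℓ => k i < u).card ≤ (Finset.range u).card := by
      apply Finset.card_le_card_of_injOn (fun i => k i)
      · intro i hi
        exact Finset.mem_range.mpr ((hmem i).mp hi)
      · exact fun a _ b _ hab => hk.injective hab
    simpa using this
  have huc : u ≤ c := by
    by_contra hcon
    push_neg at hcon
    have hchar : ∀ i : Fin ℓ, k i < u ↔ (i : ℕ) < c := by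
      intro i
      constructor
      · intro hi
        have hsub : Finset.Iic i ⊆ (Finset.univ.filter fun i : Fin ℓ => k i < u) := by
          intro j hj
          rw [Finset.mem_Iic] at hj
          exact (hmem j).mpr (lt_of_le_of_lt (hk.monotone hj) hi)
        have := Finset.card_le_card hsub
        rw [Fin.card_Iic, hcdef] at this
        omega
      · intro hic
        by_contra hns
        have hsub : (Finset.univ.filter fun i : Fin ℓ => k i < u) ⊆ Finset.Iio i := by
          intro j hj
          rw [Finset.mem_Iio]
          by_contra hji
          push_neg at hji
          exact hns (lt_of_le_of_lt (hk.monotone hji) ((hmem j).mp hj))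
        have := Finset.card_le_card hsub
        rw [Fin.card_Iio, hcdef] at this
        omega
    have hF : (∑ i : Fin ℓ, (i : ℕ)) ≤ ∑ i, k i := Finset.sum_le_sum fun i _ => sm_self hk i
    have hcl' : c < ℓ := by omega
    have hic : ∀ i : Fin ℓ, c ≤ (i : ℕ) → u + ((i : ℕ) - c) ≤ k i := by
      intro i hci
      have hknc : u ≤ k (⟨c, hcl'⟩ : Fin ℓ) := by
        have := (hchar ⟨c, hcl'⟩).not
        simp only [not_lt] at this
        exact this.mpr (by simp)
      have h2 := sm_gap' hk (show (⟨c, hcl'⟩ : Fin ℓ) ≤ i from Fin.mk_le_of_le_val hci)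
      simp only [Fin.val_mk] at h2
      omega
    have hsum : ∑ i : Fin ℓ, (if (i : ℕ) < c then (i : ℕ) else u + ((i : ℕ) - c)) ≤ ∑ i, k i := by
      apply Finset.sum_le_sum
      intro i _
      by_cases hi : (i : ℕ) < c
      · simpa [hi] using sm_self hk i
      · push_neg at hi
        simpa [not_lt.mpr hi] using hic i hi
    rw [Fin.sum_univ_eq_sum_range (fun j => if j < c then j else u + (j - c)) ℓ] at hsum
    have hsplit : ∑ j ∈ Finset.range ℓ, (if j < c then j else u + (j - c))
        = (∑ j ∈ Finset.range c, j) + ((ℓ - c) * u + ∑ j ∈ Finset.range (ℓ - c), j) := by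
      rw [Finset.range_eq_Ico, ← Finset.sum_Ico_consecutive _ (Nat.zero_le c) (le_of_lt hcl')]
      congr 1
      · rw [← Finset.range_eq_Ico]
        apply Finset.sum_congr rfl
        intro j hj
        rw [Finset.mem_range] at hj
        simp [hj]
      · rw [Finset.sum_Ico_eq_sum_range]
        have hcong : ∀ j ∈ Finset.range (ℓ - c),
            (if c + j < c then c + j else u + (c + j - c)) = u + j := by
          intro j _
          simp
        rw [Finset.sum_congr rfl hcong, Finset.sum_add_distrib]
        simp [Finset.card_range, mul_comm]
    rw [hsplit] at hsum
    -- move to ℤ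
    obtain ⟨e, he⟩ : ∃ e, ℓ - c = e := ⟨_, rfl⟩
    have hece : c + e = ℓ := by omega
    have he1 : 1 ≤ e := by omega
    rw [he] at hsum
    have hz : ((∑ j ∈ Finset.range c, j : ℕ) : ℤ) + ((e : ℤ) * (u : ℤ)
        + ((∑ j ∈ Finset.range e, j : ℕ) : ℤ)) ≤ ((∑ i : Fin ℓ, k i : ℕ) : ℤ) := by
      exact_mod_cast hsum
    have huz : ((∑ i : Fin ℓ, k i : ℕ) : ℤ) + (u : ℤ)
        = ((∑ i : Fin ℓ, (i : ℕ) : ℕ) : ℤ) + (ℓ : ℤ) := by exact_mod_cast hu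
    have gF : ((∑ i : Fin ℓ, (i : ℕ) : ℕ) : ℤ) * 2 = (ℓ : ℤ) * ((ℓ : ℤ) - 1) := by
      rw [Fin.sum_univ_eq_sum_range (fun j => j) ℓ]
      exact gauss_int ℓ
    have gA := gauss_int c
    have gB := gauss_int e
    have hconz : (c : ℤ) + 1 ≤ (u : ℤ) := by exact_mod_cast hcon
    have he1z : (1 : ℤ) ≤ (e : ℤ) := by exact_mod_cast he1
    have hecez : (c : ℤ) + (e : ℤ) = (ℓ : ℤ) := by exact_mod_cast hece
    nlinarith [hz, huz, gF, gA, gB, hconz, he1z, hecez,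
      mul_le_mul_of_nonneg_left hconz (by positivity : (0:ℤ) ≤ (e:ℤ))]
  omega

include hk in
lemma count_ge_eq (u : ℕ)
    (hu : (∑ i, k i) + u = (∑ i : Fin ℓ, (i : ℕ)) + ℓ) :
    (Finset.univ.filter fun i => u ≤ k i).card = ℓ - u := by
  have h1 := count_lt_eq hk u hu
  have h2 := Finset.card_filter_add_card_filter_not (s := (Finset.univ : Finset (Fin ℓ)))
    (p := fun i => k i < u)
  simp only [not_lt, Finset.card_univ, Fintype.card_fin] at h2
  omega

end Comb


section Char
variable {ℓ : ℕ} (k : Fin ℓ → ℕ) (hk : StrictMono k)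

lemma pHermite_ne (n : ℕ) : pHermite ℂ n ≠ 0 := by
  obtain ⟨-, hl⟩ := pHermite_props n
  intro h
  rw [h, leadingCoeff_zero] at hl
  exact pow_ne_zero n (two_ne_zero (α := ℂ)) hl.symm

include hk in
lemma deg_of_good (q : Polynomial ℂ) (hq : q ≠ 0) (hqd : q.natDegree ∉ Set.range k) :
    polyWronskian (Fin.snoc (fun i => pHermite ℂ (k i)) q) ≠ 0 ∧
    (polyWronskian (Fin.snoc (fun i => pHermite ℂ (k i)) q)).natDegree
        + (∑ i : Fin (ℓ+1), (i : ℕ)) = (∑ i, k i) + q.natDegree := by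
  set f : Fin (ℓ+1) → Polynomial ℂ := Fin.snoc (fun i => pHermite ℂ (k i)) q with hf
  set dfun : Fin (ℓ+1) → ℕ := Fin.snoc k q.natDegree with hdfun
  have hdeg : ∀ j, (f j).natDegree = dfun j := by
    intro j
    induction j using Fin.lastCases with
    | last => simp [hf, hdfun, Fin.snoc_last]
    | cast j' => simp [hf, hdfun, Fin.snoc_castSucc, (pHermite_props (k j')).1]
  have hfne : ∀ j, f j ≠ 0 := by
    intro j
    induction j using Fin.lastCases with
    | last => simpa [hf, Fin.snoc_last] using hq
    | cast j' => simpa [hf, Fin.snoc_castSucc] using pHermite_ne (k j')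
  have hdinj : Function.Injective dfun := by
    intro a b hab
    induction a using Fin.lastCases with
    | last =>
      induction b using Fin.lastCases with
      | last => rfl
      | cast b' =>
        exfalso
        apply hqd
        simp only [hdfun, Fin.snoc_last, Fin.snoc_castSucc] at hab
        exact ⟨b', hab.symm⟩
    | cast a' =>
      induction b using Fin.lastCases with
      | last =>
        exfalso
        apply hqd
        simp only [hdfun, Fin.snoc_last, Fin.snoc_castSucc] at hab
        exact ⟨a', hab⟩
      | cast b' =>
        simp only [hdfun, Fin.snoc_castSucc] at hab
        exact congrArg Fin.castSucc (hk.injective hab)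
  have hinj : Function.Injective fun j => (f j).natDegree := by
    have : (fun j => (f j).natDegree) = dfun := funext hdeg
    rw [this]; exact hdinj
  have hsum : ∑ j, (f j).natDegree = (∑ i, k i) + q.natDegree := by
    rw [show (fun j => (f j).natDegree) = dfun from funext hdeg, hdfun, Fin.sum_snoc]
  have hge : (∑ i : Fin (ℓ+1), (i : ℕ)) ≤ (∑ i, k i) + q.natDegree := by
    have := sum_ge_of_injective dfun hdinj
    rw [hdfun, Fin.sum_snoc] at this
    exact this
  obtain ⟨h1, h2⟩ := polyWronskian_props f hfne hinj
  refine ⟨h1, ?_⟩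
  rw [h2, hsum]
  omega

end Char

theorem stmt11 (ℓ : ℕ) (k : Fin ℓ → ℕ) (hk : StrictMono k) :
    ∀ U : Set (Polynomial ℂ),
      U = {u : Polynomial ℂ | ∃ p : Polynomial ℂ,
            u = polyWronskian (Fin.snoc (fun i => pHermite ℂ (k i)) p)} →
      {n : ℕ | ¬∃ u ∈ U, u ≠ 0 ∧ u.natDegree = n}.Finite ∧
      ({n : ℕ | ¬∃ u ∈ U, u ≠ 0 ∧ u.natDegree = n}.ncard : ℤ)
        = (∑ i : Fin ℓ, (k i : ℤ)) - (ℓ : ℤ) * ((ℓ : ℤ) - 1) / 2 := by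
  intro U hU
  subst hU
  set g : Fin ℓ → Polynomial ℂ := fun i => pHermite ℂ (k i) with hg
  set S := ∑ i, k i with hS
  set C' := ∑ i : Fin (ℓ+1), (i : ℕ) with hC'
  have hchar : ∀ n : ℕ,
      (∃ u ∈ {u : Polynomial ℂ | ∃ p, u = polyWronskian (Fin.snoc g p)},
        u ≠ 0 ∧ u.natDegree = n) ↔ (∃ m, m ∉ Set.range k ∧ n + C' = S + m) := by
    intro n
    constructor
    · rintro ⟨u, ⟨p, rfl⟩, hne, hdeg⟩
      obtain ⟨r, hr, hcase⟩ := exists_reduce k p.natDegree p le_rfl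
      have hueq : polyWronskian (Fin.snoc g p) = polyWronskian (Fin.snoc g (p - r)) := by
        have hpr : p = (p - r) + r := by ring
        calc polyWronskian (Fin.snoc g p) = wrL g p := rfl
          _ = wrL g ((p - r) + r) := by rw [← hpr]
          _ = wrL g (p - r) + wrL g r := map_add _ _ _
          _ = wrL g (p - r) := by rw [wrL_span_zero g hr, add_zero]
          _ = polyWronskian (Fin.snoc g (p - r)) := rfl
      rcases hcase with h0 | hgood
      · exfalso
        apply hne
        rw [hueq, h0, show polyWronskian (Fin.snoc g (0 : Polynomial ℂ)) = wrL g 0 from rfl,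
          map_zero]
      · have hne' : p - r ≠ 0 := by
          intro h
          apply hne
          rw [hueq, h, show polyWronskian (Fin.snoc g (0 : Polynomial ℂ)) = wrL g 0 from rfl,
            map_zero]
        obtain ⟨-, h2⟩ := deg_of_good k hk (p - r) hne' hgood
        rw [← hg] at h2
        refine ⟨(p - r).natDegree, hgood, ?_⟩
        rw [← hdeg, hueq]
        omega
    · rintro ⟨m, hm, hnm⟩
      have hX : (X ^ m : Polynomial ℂ) ≠ 0 := pow_ne_zero _ X_ne_zero
      have hXd : (X ^ m : Polynomial ℂ).natDegree = m := natDegree_X_pow m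
      obtain ⟨h1, h2⟩ := deg_of_good k hk (X ^ m) hX (by rw [hXd]; exact hm)
      rw [← hg] at h2
      rw [hXd] at h2
      exact ⟨_, ⟨X ^ m, rfl⟩, h1, by omega⟩
  set F : Finset ℕ := (Finset.range (S - C')) ∪
    ((Finset.univ.filter fun i : Fin ℓ => C' ≤ S + k i).image fun i => S + k i - C') with hF
  have hset : {n : ℕ | ¬∃ u ∈ {u : Polynomial ℂ | ∃ p,
      u = polyWronskian (Fin.snoc g p)}, u ≠ 0 ∧ u.natDegree = n} = ↑F := by
    ext n
    rw [Set.mem_setOf_eq, hchar n]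
    simp only [hF, Finset.coe_union, Set.mem_union, Finset.mem_coe, Finset.mem_range,
      Finset.mem_image, Finset.mem_filter, Finset.mem_univ, true_and]
    constructor
    · intro hno
      by_cases hcase : n + C' < S
      · left; omega
      · right
        push_neg at hcase
        have hm0 : n + C' = S + (n + C' - S) := by omega
        by_cases hk0 : (n + C' - S) ∈ Set.range k
        · obtain ⟨i, hi⟩ := hk0
          exact ⟨i, by omega, by omega⟩
        · exact absurd ⟨n + C' - S, hk0, hm0⟩ hno
    · rintro (hlt | ⟨i, hci, hni⟩) ⟨m, hm, hnm⟩
      · omega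
      · exact hm ⟨i, by omega⟩
  constructor
  · rw [hset]; exact F.finite_toSet
  · rw [hset, Set.ncard_coe_finset]
    have hdisj : Disjoint (Finset.range (S - C'))
        ((Finset.univ.filter fun i : Fin ℓ => C' ≤ S + k i).image fun i => S + k i - C') := by
      rw [Finset.disjoint_left]
      intro n hn hn2
      rw [Finset.mem_range] at hn
      obtain ⟨i, hi, hieq⟩ := Finset.mem_image.mp hn2
      rw [Finset.mem_filter] at hi
      omega
    have hinjOn : Set.InjOn (fun i => S + k i - C')
        ↑(Finset.univ.filter fun i : Fin ℓ => C' ≤ S + k i) := by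
      intro a ha b hb hab
      simp only [Finset.coe_filter, Set.mem_setOf_eq] at ha hb
      have : k a = k b := by simp only at hab; omega
      exact hk.injective this
    rw [hF, Finset.card_union_of_disjoint hdisj, Finset.card_range,
      Finset.card_image_of_injOn hinjOn]
    have hFsum : (∑ i : Fin ℓ, (i : ℕ)) ≤ S := Finset.sum_le_sum fun i _ => sm_self hk i
    have hC'eq : C' = (∑ i : Fin ℓ, (i : ℕ)) + ℓ := by
      rw [hC', Fin.sum_univ_castSucc]
      simp
    have gF : ((∑ i : Fin ℓ, (i : ℕ) : ℕ) : ℤ) * 2 = (ℓ : ℤ) * ((ℓ : ℤ) - 1) := by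
      rw [Fin.sum_univ_eq_sum_range (fun j => j) ℓ]
      exact gauss_int ℓ
    have hdiv : (ℓ : ℤ) * ((ℓ : ℤ) - 1) / 2 = ((∑ i : Fin ℓ, (i : ℕ) : ℕ) : ℤ) := by
      rw [← gF, Int.mul_ediv_cancel _ (by norm_num)]
    have hcastS : (∑ i : Fin ℓ, (k i : ℤ)) = ((S : ℕ) : ℤ) := by
      rw [hS]; push_cast; rfl
    rw [hdiv, hcastS]
    by_cases hSC : C' ≤ S
    · have hfilter : (Finset.univ.filter fun i : Fin ℓ => C' ≤ S + k i) = Finset.univ := by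
        ext i
        simp only [Finset.mem_filter, Finset.mem_univ, true_and, iff_true]
        omega
      rw [hfilter, Finset.card_univ, Fintype.card_fin]
      omega
    · push_neg at hSC
      have hu : S + (C' - S) = (∑ i : Fin ℓ, (i : ℕ)) + ℓ := by omega
      have hfilter : (Finset.univ.filter fun i : Fin ℓ => C' ≤ S + k i)
          = (Finset.univ.filter fun i : Fin ℓ => (C' - S) ≤ k i) := by
        ext i
        simp only [Finset.mem_filter, Finset.mem_univ, true_and]
        omega
      rw [hfilter, count_ge_eq hk _ hu]
      omega
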